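/- If a finite, connected, acyclic digraph D admits both a U-coloring and an L-coloring (a U-coloring of the reversed digraph), then D is the cover graph of a distributive lattice. -/

import Mathlib

def UColoring {V κ : Type*} (A : V → V → Prop) (c : V → V → κ) : Prop :=
  (∀ v u w : V, A v u → A v w → u ≠ w → c v u ≠ c v w) ∧
  (∀ v u w : V, A v u → A v w → u ≠ w →
    ∃ z : V, A u z ∧ A w z ∧ c v u = c w z ∧ c v w = c u z)

namespace ULD

open Relation

variable {V κ : Type}

/-- Paths recording the multiset of arc colors. -/
inductive PathC (A : V → V → Prop) (c : V → V → κ) : V → V → Multiset κ → Prop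
  | nil (x : V) : PathC A c x x 0
  | cons {x y z : V} {s : Multiset κ} : A x y → PathC A c y z s → PathC A c x z (c x y ::ₘ s)

theorem PathC.le {A : V → V → Prop} {c : V → V → κ} {x y : V} {p : Multiset κ}
    (h : PathC A c x y p) : ReflTransGen A x y := by
  induction h with
  | nil => exact .refl
  | cons h _ ih => exact .head h ih

theorem exists_pathC {A : V → V → Prop} (c : V → V → κ) {x y : V}
    (h : ReflTransGen A x y) : ∃ p, PathC A c x y p := by
  induction h using ReflTransGen.head_induction_on with
  | refl => exact ⟨0, .nil y⟩
  | head hab _ ih => exact ⟨_, .cons hab ih.choose_spec⟩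

theorem PathC.trans {A : V → V → Prop} {c : V → V → κ} {x y z : V} {p q : Multiset κ}
    (h : PathC A c x y p) (h' : PathC A c y z q) : PathC A c x z (p + q) := by
  induction h with
  | nil => simpa using h'
  | cons hab hp ih => rw [Multiset.cons_add]; exact .cons hab (ih h')

theorem PathC.eq_of_zero' {A : V → V → Prop} {c : V → V → κ} {x y : V} {p : Multiset κ}
    (h : PathC A c x y p) (hp : p = 0) : x = y := by
  induction h with
  | nil => rfl
  | cons _ _ _ => exact absurd hp (Multiset.cons_ne_zero)

theorem PathC.eq_of_zero {A : V → V → Prop} {c : V → V → κ} {x y : V}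
    (h : PathC A c x y 0) : x = y := h.eq_of_zero' rfl

/-- All the data of a U-colored acyclic digraph with a global sink. -/
structure Ctx (V κ : Type) where
  A : V → V → Prop
  c : V → V → κ
  hacyc : ∀ x, ¬ Relation.TransGen A x x
  hU1 : ∀ v u w, A v u → A v w → u ≠ w → c v u ≠ c v w
  hU2 : ∀ v u w, A v u → A v w → u ≠ w →
    ∃ z, A u z ∧ A w z ∧ c v u = c w z ∧ c v w = c u z
  T : V
  hT : ∀ x, Relation.ReflTransGen A x T

variable (C : Ctx V κ)

theorem Ctx.Tmax : ∀ u, ¬ C.A C.T u := fun u h =>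
  C.hacyc C.T (Relation.TransGen.head' h (C.hT u))

theorem Ctx.wfUp [Fintype V] : WellFounded (fun u v => Relation.TransGen C.A v u) := by
  letI : IsTrans V (fun u v => Relation.TransGen C.A v u) := ⟨fun a b d h1 h2 => h2.trans h1⟩
  letI : IsIrrefl V (fun u v => Relation.TransGen C.A v u) := ⟨fun a h => C.hacyc a h⟩
  exact Finite.wellFounded_of_trans_of_irrefl _

theorem Ctx.pathc_unique [Fintype V] :
    ∀ x : V, ∀ {p q : Multiset κ}, PathC C.A C.c x C.T p → PathC C.A C.c x C.T q → p = q := by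
  intro x
  induction x using C.wfUp.induction with
  | _ x ih =>
    intro p q hp hq
    cases hp with
    | nil =>
      cases hq with
      | nil => rfl
      | cons h _ => exact absurd h (C.Tmax _)
    | @cons _ y _ s hxy hp' =>
      cases hq with
      | nil => exact absurd hxy (C.Tmax _)
      | @cons _ w _ s' hxw hq' =>
        by_cases hyw : y = w
        · subst hyw
          rw [ih y (.single hxy) hp' hq']
        · obtain ⟨z, hyz, hwz, hc1, hc2⟩ := C.hU2 x y w hxy hxw hyw
          obtain ⟨t, ht⟩ := exists_pathC C.c (C.hT z)
          have hs : s = C.c y z ::ₘ t := ih y (.single hxy) hp' (.cons hyz ht)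
          have hs' : s' = C.c w z ::ₘ t := ih w (.single hxw) hq' (.cons hwz ht)
          rw [hs, hs', ← hc1, ← hc2, Multiset.cons_swap]

noncomputable def Ctx.G (x : V) : Multiset κ := (exists_pathC C.c (C.hT x)).choose

theorem Ctx.G_spec (x : V) : PathC C.A C.c x C.T (C.G x) :=
  (exists_pathC C.c (C.hT x)).choose_spec

theorem Ctx.G_eq [Fintype V] {x : V} {p : Multiset κ} (hp : PathC C.A C.c x C.T p) :
    p = C.G x := C.pathc_unique x hp (C.G_spec x)

theorem Ctx.G_arc [Fintype V] {x y : V} (h : C.A x y) :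
    C.G x = C.c x y ::ₘ C.G y := (C.G_eq (.cons h (C.G_spec y))).symm

theorem Ctx.G_decomp [Fintype V] {x y : V} (h : ReflTransGen C.A x y) :
    ∃ p, PathC C.A C.c x y p ∧ C.G x = p + C.G y := by
  obtain ⟨p, hp⟩ := exists_pathC C.c h
  exact ⟨p, hp, (C.G_eq (hp.trans (C.G_spec y))).symm⟩

theorem Ctx.G_mono [Fintype V] {x y : V} (h : ReflTransGen C.A x y) : C.G y ≤ C.G x := by
  obtain ⟨p, _, hd⟩ := C.G_decomp h
  rw [hd]
  exact le_add_self


section Top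

variable {A : V → V → Prop} {c : V → V → κ}

theorem strip (hU2 : ∀ v u w, A v u → A v w → u ≠ w →
      ∃ z, A u z ∧ A w z ∧ c v u = c w z ∧ c v w = c u z)
    {v t : V} (hvt : ReflTransGen A v t) :
    ∀ w, A v w → ∃ s, ReflTransGen A t s ∧ ReflTransGen A w s := by
  induction hvt using ReflTransGen.head_induction_on with
  | refl => exact fun w hw => ⟨w, .single hw, .refl⟩
  | @head a b hab hbt ih =>
    intro w haw
    by_cases hwb : w = b
    · subst hwb; exact ⟨t, .refl, hbt⟩
    · obtain ⟨z, hbz, hwz, _, _⟩ := hU2 a b w hab haw (Ne.symm hwb)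
      obtain ⟨s, hts, hzs⟩ := ih z hbz
      exact ⟨s, hts, .head hwz hzs⟩

theorem confl (hU2 : ∀ v u w, A v u → A v w → u ≠ w →
      ∃ z, A u z ∧ A w z ∧ c v u = c w z ∧ c v w = c u z)
    {v x y : V} (hvx : ReflTransGen A v x) (hvy : ReflTransGen A v y) :
    ∃ s, ReflTransGen A x s ∧ ReflTransGen A y s := by
  induction hvy with
  | refl => exact ⟨x, .refl, hvx⟩
  | @tail b d _ hbd ih =>
    obtain ⟨s, hxs, hbs⟩ := ih
    obtain ⟨s', hss', hds'⟩ := strip hU2 hbs d hbd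
    exact ⟨s', hxs.trans hss', hds'⟩

theorem exists_top [Fintype V] [Nonempty V]
    (hacyc : ∀ x, ¬ Relation.TransGen A x x)
    (hU2 : ∀ v u w, A v u → A v w → u ≠ w →
      ∃ z, A u z ∧ A w z ∧ c v u = c w z ∧ c v w = c u z)
    (hconn : ∀ x y : V, Relation.ReflTransGen (fun a b => A a b ∨ A b a) x y) :
    ∃ T, ∀ x, ReflTransGen A x T := by
  have wf : WellFounded (fun u v : V => A v u) := by
    have wf' : WellFounded (fun u v : V => Relation.TransGen A v u) := by
      letI : IsTrans V (fun u v => Relation.TransGen A v u) := ⟨fun a b d h1 h2 => h2.trans h1⟩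
      letI : IsIrrefl V (fun u v => Relation.TransGen A v u) := ⟨fun a h => hacyc a h⟩
      exact Finite.wellFounded_of_trans_of_irrefl _
    exact Subrelation.wf (fun h => Relation.TransGen.single h) wf'
  obtain ⟨T, -, hTmin⟩ := wf.has_min Set.univ ⟨Classical.arbitrary V, trivial⟩
  have hTmax : ∀ u, ¬ A T u := fun u h => hTmin u trivial h
  refine ⟨T, fun x => ?_⟩
  have h := hconn x T
  induction h using ReflTransGen.head_induction_on with
  | refl => exact .refl
  | @head a b hab _ ih =>
    rcases hab with hab | hba
    · exact .head hab ih
    · obtain ⟨s, has, hTs⟩ := confl (c := c) hU2 (.single hba : ReflTransGen A b a) ih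
      rcases hTs.cases_head with rfl | ⟨d, hTd, _⟩
      · exact has
      · exact absurd hTd (hTmax d)

end Top

theorem Ctx.swap_lemma [Fintype V] {x t : V} {p : Multiset κ}
    (hp : PathC C.A C.c x t p) :
    ∀ z, C.A x z → C.c x z ∈ p → ReflTransGen C.A z t := by
  induction hp with
  | nil => intro z _ hm; exact absurd hm (by simp)
  | @cons a y t' s hay hyt ih =>
    intro z haz hmem
    by_cases hzy : z = y
    · subst hzy; exact hyt.le
    · rcases Multiset.mem_cons.mp hmem with heq | hmem'
      · exact absurd heq (C.hU1 a z y haz hay hzy)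
      · obtain ⟨w, hyw, hzw, hc1, hc2⟩ := C.hU2 a y z hay haz (Ne.symm hzy)
        have hw : ReflTransGen C.A w t' := ih w hyw (by rw [← hc2]; exact hmem')
        exact .head hzw hw

theorem Ctx.sibling [Fintype V] [DecidableEq κ] {v a b : V}
    (hva : C.A v a) (hvb : C.A v b) (hab : a ≠ b) :
    ∃ z, C.A a z ∧ C.A b z ∧
      (∀ t, ReflTransGen C.A a t → ReflTransGen C.A b t → ReflTransGen C.A z t) ∧
      C.G z = C.G a ∩ C.G b := by
  obtain ⟨z, haz, hbz, hc1, hc2⟩ := C.hU2 v a b hva hvb hab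
  -- hc1 : c v a = c b z, hc2 : c v b = c a z
  have hGa : C.G a = C.c v b ::ₘ C.G z := by rw [C.G_arc haz, ← hc2]
  have hGb : C.G b = C.c v a ::ₘ C.G z := by rw [C.G_arc hbz, ← hc1]
  have hne : C.c v a ≠ C.c v b := C.hU1 v a b hva hvb hab
  refine ⟨z, haz, hbz, ?_, ?_⟩
  · intro t hat hbt
    obtain ⟨p, hp, hpa⟩ := C.G_decomp hat
    obtain ⟨q, hq, hqb⟩ := C.G_decomp hbt
    have e1 : Multiset.count (C.c v b) p + Multiset.count (C.c v b) (C.G t)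
        = Multiset.count (C.c v b) (C.G z) + 1 := by
      have h := congrArg (Multiset.count (C.c v b)) (hpa.symm.trans hGa)
      simpa [Multiset.count_add, Multiset.count_cons_self] using h
    have e2 : Multiset.count (C.c v b) q + Multiset.count (C.c v b) (C.G t)
        = Multiset.count (C.c v b) (C.G z) := by
      have h := congrArg (Multiset.count (C.c v b)) (hqb.symm.trans hGb)
      simpa [Multiset.count_add, Multiset.count_cons_of_ne (Ne.symm hne)] using h
    have hmem : C.c v b ∈ p := by
      rw [← Multiset.count_pos]; omega
    exact C.swap_lemma hp z haz (by rw [← hc2]; exact hmem)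
  · rw [hGa, hGb]
    ext e
    rw [Multiset.count_inter, Multiset.count_cons, Multiset.count_cons]
    by_cases h1 : e = C.c v b
    · have h2 : e ≠ C.c v a := fun h2 => hne (h2.symm.trans h1)
      rw [if_pos h1, if_neg h2, Nat.min_def]
      split_ifs <;> omega
    · rw [if_neg h1]
      by_cases h2 : e = C.c v a
      · rw [if_pos h2, Nat.min_def]
        split_ifs <;> omega
      · rw [if_neg h2, Nat.min_def]
        split_ifs <;> omega


theorem Ctx.lub [Fintype V] [DecidableEq κ] (C : Ctx V κ) :
    ∀ v x y : V, ReflTransGen C.A v x → ReflTransGen C.A v y →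
      ∃ j, ReflTransGen C.A x j ∧ ReflTransGen C.A y j ∧
        (∀ t, ReflTransGen C.A x t → ReflTransGen C.A y t → ReflTransGen C.A j t) ∧
        C.G j = C.G x ∩ C.G y := by
  intro v
  induction v using C.wfUp.induction with
  | _ v ih =>
    intro x y hvx hvy
    rcases hvx.cases_head with rfl | ⟨a, hva, hax⟩
    · refine ⟨y, hvy, .refl, fun t _ h2 => h2, ?_⟩
      exact le_antisymm (Multiset.le_inter (C.G_mono hvy) le_rfl) (Multiset.inter_le_right)
    · rcases hvy.cases_head with rfl | ⟨b, hvb, hby⟩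
      · refine ⟨x, .refl, hvx, fun t h1 _ => h1, ?_⟩
        exact le_antisymm (Multiset.le_inter le_rfl (C.G_mono hvx)) (Multiset.inter_le_left)
      · by_cases hab : a = b
        · subst hab
          exact ih a (.single hva) x y hax hby
        · obtain ⟨z, haz, hbz, hzl, hGz⟩ := C.sibling hva hvb hab
          obtain ⟨u, hxu, hzu, hul, hGu⟩ := ih a (.single hva) x z hax (.single haz)
          obtain ⟨w, hyw, hzw, hwl, hGw⟩ := ih b (.single hvb) y z hby (.single hbz)
          obtain ⟨j, huj, hwj, hjl, hGj⟩ :=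
            ih z ((Relation.TransGen.single hva).tail haz) u w hzu hzw
          refine ⟨j, hxu.trans huj, hyw.trans hwj, ?_, ?_⟩
          · intro t hxt hyt
            have hzt := hzl t (hax.trans hxt) (hby.trans hyt)
            exact hjl t (hul t hxt hzt) (hwl t hyt hzt)
          · rw [hGj, hGu, hGw, hGz]
            ext e
            simp only [Multiset.count_inter]
            have h1 : Multiset.count e (C.G x) ≤ Multiset.count e (C.G a) :=
              Multiset.le_iff_count.mp (C.G_mono hax) e
            have h2 : Multiset.count e (C.G y) ≤ Multiset.count e (C.G b) :=
              Multiset.le_iff_count.mp (C.G_mono hby) e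
            simp only [Nat.min_def]
            split_ifs <;> omega
  
end ULD

/-- If a finite, connected, acyclic digraph admits both a U-coloring and an
L-coloring (a U-coloring of the reversed digraph), then it is the cover graph
of a distributive lattice: its reachability order is order-isomorphic to a
distributive lattice, with the arcs corresponding exactly to covers. -/
theorem stmt_10 {V κ₁ κ₂ : Type} [Fintype V] [Nonempty V] (A : V → V → Prop)
    (cU : V → V → κ₁) (cL : V → V → κ₂)
    (hconn : ∀ x y : V, Relation.ReflTransGen (fun a b => A a b ∨ A b a) x y)
    (hacyc : ∀ x : V, ¬ Relation.TransGen A x x)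
    (hU : UColoring A cU) (hL : UColoring (fun x y => A y x) cL) :
    ∃ (L : Type) (_ : DistribLattice L) (f : V → L),
      Function.Bijective f ∧
      (∀ x y : V, Relation.ReflTransGen A x y ↔ f x ≤ f y) ∧
      (∀ x y : V, A x y ↔ f x ⋖ f y) := by
  classical
  obtain ⟨hU1, hU2⟩ := hU
  obtain ⟨hL1, hL2⟩ := hL
  have hacyc' : ∀ x, ¬ Relation.TransGen (fun a b => A b a) x x := fun x h =>
    hacyc x (Relation.transGen_swap.mp h)
  have hconn' : ∀ x y : V,
      Relation.ReflTransGen (fun a b => (A b a) ∨ (A a b)) x y :=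
    fun x y => Relation.ReflTransGen.mono (fun a b (h : A a b ∨ A b a) => h.symm) x y (hconn x y)
  obtain ⟨T, hT⟩ := ULD.exists_top (c := cU) hacyc hU2 hconn
  obtain ⟨B, hB'⟩ := ULD.exists_top (c := cL) hacyc' hL2 hconn'
  have hB : ∀ x, Relation.ReflTransGen A B x := fun x =>
    Relation.reflTransGen_swap.mp (hB' x)
  set CU : ULD.Ctx V κ₁ := ⟨A, cU, hacyc, hU1, hU2, T, hT⟩ with hCU
  set CL : ULD.Ctx V κ₂ := ⟨fun a b => A b a, cL, hacyc', hL1, hL2, B, hB'⟩ with hCL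
  have supEx : ∀ x y, ∃ j, Relation.ReflTransGen A x j ∧ Relation.ReflTransGen A y j ∧
      (∀ t, Relation.ReflTransGen A x t → Relation.ReflTransGen A y t →
        Relation.ReflTransGen A j t) ∧ CU.G j = CU.G x ∩ CU.G y :=
    fun x y => CU.lub B x y (hB x) (hB y)
  choose sup hs1 hs2 hs3 hsG using supEx
  have infEx : ∀ x y, ∃ m, Relation.ReflTransGen A m x ∧ Relation.ReflTransGen A m y ∧
      (∀ t, Relation.ReflTransGen A t x → Relation.ReflTransGen A t y →
        Relation.ReflTransGen A t m) ∧ CL.G m = CL.G x ∩ CL.G y := by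
    intro x y
    obtain ⟨m, h1, h2, h3, h4⟩ := CL.lub T x y
      (Relation.reflTransGen_swap.mpr (hT x)) (Relation.reflTransGen_swap.mpr (hT y))
    exact ⟨m, Relation.reflTransGen_swap.mp h1, Relation.reflTransGen_swap.mp h2,
      fun t ht1 ht2 => Relation.reflTransGen_swap.mp
        (h3 t (Relation.reflTransGen_swap.mpr ht1) (Relation.reflTransGen_swap.mpr ht2)), h4⟩
  choose inf hi1 hi2 hi3 hiG using infEx
  -- ranks
  have rkarc : ∀ {x y}, A x y → (CU.G x).card = (CU.G y).card + 1 := by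
    intro x y h
    rw [CU.G_arc h]
    simp
  have ρarc : ∀ {x y}, A x y → (CL.G y).card = (CL.G x).card + 1 := by
    intro x y h
    rw [CL.G_arc (show CL.A y x from h)]
    simp
  have hconst : ∀ x y : V, (CU.G x).card + (CL.G x).card = (CU.G y).card + (CL.G y).card := by
    intro x y
    have h := hconn x y
    induction h with
    | refl => rfl
    | @tail b d _ hbd ih =>
      rcases hbd with h | h
      · have e1 := rkarc h
        have e2 := ρarc h
        omega
      · have e1 := rkarc h
        have e2 := ρarc h
        omega
  have gmono : ∀ {x y}, Relation.ReflTransGen A x y → CU.G y ≤ CU.G x :=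
    fun h => CU.G_mono h
  have hmono : ∀ {x y}, Relation.ReflTransGen A x y → CL.G x ≤ CL.G y :=
    fun h => CL.G_mono (Relation.reflTransGen_swap.mpr h)
  have rk_lt : ∀ {x y}, Relation.ReflTransGen A x y → x ≠ y →
      (CU.G y).card < (CU.G x).card := by
    intro x y h hne
    obtain ⟨p, hp, hd⟩ := CU.G_decomp h
    have hp0 : p ≠ 0 := fun h0 => hne (hp.eq_of_zero' h0)
    have := Multiset.card_pos.mpr hp0
    rw [hd, Multiset.card_add]
    omega
  have le_antisymm' : ∀ {x y}, Relation.ReflTransGen A x y → Relation.ReflTransGen A y x →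
      x = y := by
    intro x y h1 h2
    by_contra hne
    have k1 := rk_lt h1 hne
    have k2 := rk_lt h2 (Ne.symm hne)
    omega
  have eq_of_le_card : ∀ {x y}, Relation.ReflTransGen A x y →
      (CU.G x).card ≤ (CU.G y).card → x = y := by
    intro x y h hc
    by_contra hne
    have := rk_lt h hne
    omega
  have inj : ∀ {x y}, CU.G x = CU.G y → x = y := by
    intro x y hG
    have h1 : CU.G (sup x y) = CU.G x := by
      rw [hsG, hG]
      exact le_antisymm (Multiset.inter_le_left) (Multiset.le_inter le_rfl le_rfl)
    have hx : x = sup x y := eq_of_le_card (hs1 x y) (le_of_eq (congrArg _ h1.symm))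
    have hy : y = sup x y := eq_of_le_card (hs2 x y)
      (le_of_eq (congrArg Multiset.card (hG.symm.trans h1.symm)))
    exact hx.trans hy.symm
  have hiG' : ∀ x y, CU.G (inf x y) = CU.G x ∪ CU.G y := by
    intro x y
    have k1 : CU.G x ∪ CU.G y ≤ CU.G (inf x y) :=
      Multiset.union_le (gmono (hi1 x y)) (gmono (hi2 x y))
    have k2 : CL.G x ∪ CL.G y ≤ CL.G (sup x y) :=
      Multiset.union_le (hmono (hs1 x y)) (hmono (hs2 x y))
    have c1 := Multiset.card_le_card k1
    have c2 := Multiset.card_le_card k2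
    have u1 : (CU.G x ∪ CU.G y).card + (CU.G x ∩ CU.G y).card
        = (CU.G x).card + (CU.G y).card := by
      rw [← Multiset.card_add, Multiset.union_add_inter, Multiset.card_add]
    have u2 : (CL.G x ∪ CL.G y).card + (CL.G x ∩ CL.G y).card
        = (CL.G x).card + (CL.G y).card := by
      rw [← Multiset.card_add, Multiset.union_add_inter, Multiset.card_add]
    have e1 : (CU.G (sup x y)).card = (CU.G x ∩ CU.G y).card :=
      congrArg Multiset.card (hsG x y)
    have e2 : (CL.G (inf x y)).card = (CL.G x ∩ CL.G y).card :=
      congrArg Multiset.card (hiG x y)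
    have q1 := hconst (inf x y) x
    have q2 := hconst (sup x y) x
    have q3 := hconst y x
    have hcard : (CU.G (inf x y)).card ≤ (CU.G x ∪ CU.G y).card := by omega
    exact (Multiset.eq_of_le_of_card_le k1 hcard).symm
  letI instPO : PartialOrder V :=
    { le := fun x y => Relation.ReflTransGen A x y
      le_refl := fun x => .refl
      le_trans := fun a b c h1 h2 => Relation.ReflTransGen.trans h1 h2
      le_antisymm := fun a b h1 h2 => le_antisymm' h1 h2 }
  have distrib_eq : ∀ x y z : V, inf (sup x y) (sup x z) = sup x (inf y z) := by
    intro x y z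
    apply inj
    rw [hiG', hsG, hsG, hsG, hiG']
    ext e
    simp only [Multiset.count_union, Multiset.count_inter]
    exact (min_max_distrib_left _ _ _).symm
  letI instD : DistribLattice V :=
    { instPO with
      sup := sup
      le_sup_left := hs1
      le_sup_right := hs2
      sup_le := fun a b c h1 h2 => hs3 a b c h1 h2
      inf := inf
      inf_le_left := hi1
      inf_le_right := hi2
      le_inf := fun a b c h1 h2 => hi3 b c a h1 h2
      le_sup_inf := fun x y z => by
        show Relation.ReflTransGen A (inf (sup x y) (sup x z)) (sup x (inf y z))
        rw [distrib_eq x y z] }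
  have cov : ∀ x y : V, A x y ↔ x ⋖ y := by
    intro x y
    constructor
    · intro h
      have hlt : x < y := lt_iff_le_not_ge.mpr
        ⟨.single h, fun hyx => hacyc x (Relation.TransGen.head' h hyx)⟩
      refine ⟨hlt, ?_⟩
      intro m h1 h2
      have k1 := rk_lt (le_of_lt h1) (ne_of_lt h1)
      have k2 := rk_lt (le_of_lt h2) (ne_of_lt h2)
      have k3 := rkarc h
      omega
    · intro h
      rcases Relation.ReflTransGen.cases_head (le_of_lt h.1) with heq | ⟨u, hxu, huy⟩
      · exact absurd heq (ne_of_lt h.1)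
      · by_cases huy' : u = y
        · subst huy'; exact hxu
        · exfalso
          have hxu' : x < u := lt_iff_le_not_ge.mpr
            ⟨.single hxu, fun hux => hacyc x (Relation.TransGen.head' hxu hux)⟩
          have huy2 : u < y := lt_iff_le_not_ge.mpr
            ⟨huy, fun hyu => huy' (le_antisymm' huy hyu)⟩
          exact h.2 hxu' huy2
  exact ⟨V, instD, id, Function.bijective_id, fun x y => Iff.rfl, cov⟩
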